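/- Let a ∈ ℝ, 0 ≤ R ≤ 1, and let K_{a,R} = h + conj(g) be the generalized harmonic Koebe function. Then h + g = k_{a+R} on 𝔻. Equivalently (symmetry property (i)), K_H(1, a, 1, R) = K_H(−1, a+R, 1, R). -/

import Mathlib

open Complex Set

noncomputable section

/-- The open unit disk in the complex plane. -/
def unitDisk : Set ℂ := {z : ℂ | ‖z‖ < 1}

/-- The generalized Koebe function `k_a`, using the principal branch of the logarithm
(via the complex power function). -/
def koebeFn (a : ℂ) (z : ℂ) : ℂ :=
  if a = 0 then (1 / 2) * Complex.log ((1 + z) / (1 - z))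
  else (1 / (2 * a)) * (((1 + z) / (1 - z)) ^ a - 1)

/-- The lens map `l_R` (with principal-branch powers); note that this formula also
gives `l_0 ≡ 0` and `l_1 = id` on the unit disk. -/
def lensMap (R : ℝ) (z : ℂ) : ℂ :=
  (((1 + z) / (1 - z)) ^ (R : ℂ) - 1) / (((1 + z) / (1 - z)) ^ (R : ℂ) + 1)

/-- The `n`-th Taylor coefficient of `f` at `0`. -/
def coeffAt (f : ℂ → ℂ) (n : ℕ) : ℂ := iteratedDeriv n f 0 / n.factorial

lemma unitDisk_eq_ball : unitDisk = Metric.ball (0:ℂ) 1 := by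
  ext z; simp [unitDisk, Metric.mem_ball, Complex.dist_eq]

lemma isOpen_unitDisk : IsOpen unitDisk := by
  rw [unitDisk_eq_ball]; exact Metric.isOpen_ball

lemma one_sub_ne {z : ℂ} (hz : z ∈ unitDisk) : (1 : ℂ) - z ≠ 0 := by
  intro hc
  have : z = 1 := by linear_combination -hc
  simp [unitDisk, this] at hz

lemma re_pos {z : ℂ} (hz : z ∈ unitDisk) : 0 < ((1 + z) / (1 - z)).re := by
  have h1 : Complex.normSq z < 1 := by
    have := hz; simp only [unitDisk, mem_setOf_eq] at this
    calc Complex.normSq z = (‖z‖)^2 := (Complex.sq_norm z).symm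
      _ < 1 := by nlinarith [norm_nonneg z]
  have h2 : (0:ℝ) < Complex.normSq (1 - z) := by
    rw [Complex.normSq_pos]; exact one_sub_ne hz
  rw [Complex.div_re]
  have : (1 + z).re * (1 - z).re + (1 + z).im * (1 - z).im = 1 - Complex.normSq z := by
    simp [Complex.normSq_apply]; ring
  rw [← add_div, this]
  exact div_pos (by linarith) h2

lemma w_ne {z : ℂ} (hz : z ∈ unitDisk) : ((1 + z) / (1 - z)) ≠ 0 := by
  intro hc
  have := re_pos hz
  rw [hc] at this
  simp at this

lemma w_slit {z : ℂ} (hz : z ∈ unitDisk) : ((1 + z) / (1 - z)) ∈ Complex.slitPlane :=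
  Or.inl (re_pos hz)

lemma hasDerivAt_w {z : ℂ} (hz : z ∈ unitDisk) :
    HasDerivAt (fun z : ℂ => (1 + z) / (1 - z)) (2 / (1 - z)^2) z := by
  have h1 : HasDerivAt (fun z : ℂ => 1 + z) 1 z := by
    simpa using (hasDerivAt_id z).const_add 1
  have h2 : HasDerivAt (fun z : ℂ => 1 - z) (-1) z := by
    simpa using (hasDerivAt_id z).const_sub 1
  have := h1.div h2 (one_sub_ne hz)
  refine this.congr_deriv ?_
  field_simp
  ring

lemma koebe_hasDerivAt (a : ℂ) {z : ℂ} (hz : z ∈ unitDisk) :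
    HasDerivAt (koebeFn a) (((1 + z) / (1 - z)) ^ (a - 1) / (1 - z)^2) z := by
  by_cases ha : a = 0
  · subst ha
    have hl := (Complex.hasDerivAt_log (w_slit hz)).comp z (hasDerivAt_w hz)
    have := hl.const_mul (1/2 : ℂ)
    simp only [Function.comp] at this
    have heq : (fun z => (1/2 : ℂ) * Complex.log ((1 + z) / (1 - z))) = koebeFn 0 := by
      funext x; simp [koebeFn]
    rw [heq] at this
    refine this.congr_deriv ?_
    have h1z : ((1:ℂ) - z) ≠ 0 := one_sub_ne hz
    rw [show (0 : ℂ) - 1 = -1 by ring, Complex.cpow_neg_one]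
    field_simp
  · have hc := ((hasDerivAt_w hz).cpow_const (w_slit hz) (c := a))
    have := (hc.sub_const 1).const_mul (1/(2*a) : ℂ)
    have heq : (fun z : ℂ => (1/(2*a) : ℂ) * (((1 + z) / (1 - z)) ^ a - 1)) = koebeFn a := by
      funext x; simp [koebeFn, ha]
    rw [heq] at this
    refine this.congr_deriv ?_
    have h1z : ((1:ℂ) - z) ≠ 0 := one_sub_ne hz
    field_simp

lemma re_cpow_pos {w : ℂ} (hw : 0 < w.re) {R : ℝ} (hR0 : 0 ≤ R) (hR1 : R ≤ 1) :
    0 < (w ^ (R : ℂ)).re := by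
  have hwne : w ≠ 0 := fun hc => by simp [hc] at hw
  rw [Complex.cpow_def_of_ne_zero hwne, Complex.exp_re]
  have him : (Complex.log w * (R : ℂ)).im = R * w.arg := by
    simp [Complex.log_im, Complex.mul_im, mul_comm]
  rw [him]
  have harg : |w.arg| < Real.pi / 2 :=
    Complex.abs_arg_lt_pi_div_two_iff.2 (Or.inl hw)
  have : |R * w.arg| < Real.pi / 2 := by
    rw [abs_mul, _root_.abs_of_nonneg hR0]
    calc R * |w.arg| ≤ 1 * |w.arg| := by
          apply mul_le_mul_of_nonneg_right hR1 (abs_nonneg _)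
      _ < Real.pi / 2 := by simpa using harg
  have hcos : 0 < Real.cos (R * w.arg) := by
    apply Real.cos_pos_of_mem_Ioo
    constructor <;> [linarith [neg_abs_le (R * w.arg)]; linarith [le_abs_self (R * w.arg)]]
  positivity

/-- For real `a` and `0 ≤ R ≤ 1`, the generalized harmonic Koebe function
`K_{a,R} = h + conj g` (defined by the shear system `h - g = k_a`, `g' = l_R · h'`,
`h(0) = g(0) = 0`) satisfies `h + g = k_{a+R}` on the unit disk; equivalently,
`K_H(1, a, 1, R) = K_H(-1, a+R, 1, R)`. -/
theorem generalized_harmonic_koebe_sum_parts (a R : ℝ) (hR0 : 0 ≤ R) (hR1 : R ≤ 1)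
    (h g : ℂ → ℂ)
    (hh : DifferentiableOn ℂ h unitDisk) (hg : DifferentiableOn ℂ g unitDisk)
    (h0 : h 0 = 0) (g0 : g 0 = 0)
    (hshear : ∀ z ∈ unitDisk, h z - g z = koebeFn (a : ℂ) z)
    (hdil : ∀ z ∈ unitDisk, deriv g z = lensMap R z * deriv h z) :
    ∀ z ∈ unitDisk, h z + g z = koebeFn ((a : ℂ) + (R : ℂ)) z := by
  have h0mem : (0 : ℂ) ∈ unitDisk := by simp [unitDisk]
  -- derivative of h+g equals derivative of koebeFn (a+R) on disk
  have key : ∀ z ∈ unitDisk,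
      HasDerivAt (fun z => h z + g z - koebeFn ((a:ℂ) + R) z) 0 z := by
    intro z hz
    have hnhds : unitDisk ∈ nhds z := isOpen_unitDisk.mem_nhds hz
    have hhz : DifferentiableAt ℂ h z := hh.differentiableAt hnhds
    have hgz : DifferentiableAt ℂ g z := hg.differentiableAt hnhds
    set w := (1 + z) / (1 - z) with hwdef
    have hwR1 : w ^ (R:ℂ) + 1 ≠ 0 := by
      intro hc
      have := re_cpow_pos (re_pos hz) hR0 hR1
      rw [show w ^ (R:ℂ) = -1 by linear_combination hc] at this
      norm_num at this
    -- deriv (h - g) = deriv koebe a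
    have hderiv_sub : deriv h z - deriv g z = w ^ ((a:ℂ) - 1) / (1 - z)^2 := by
      have hev : (fun z => h z - g z) =ᶠ[nhds z] koebeFn (a:ℂ) :=
        Filter.eventuallyEq_of_mem hnhds hshear
      have := hev.deriv_eq
      rw [deriv_fun_sub hhz hgz] at this
      rw [this, (koebe_hasDerivAt (a:ℂ) hz).deriv]
    have hdilz := hdil z hz
    have hlens : lensMap R z = (w ^ (R:ℂ) - 1) / (w ^ (R:ℂ) + 1) := rfl
    -- solve for deriv h
    have hderivh : deriv h z * (2 / (w ^ (R:ℂ) + 1)) = w ^ ((a:ℂ) - 1) / (1 - z)^2 := by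
      rw [← hderiv_sub, hdilz, hlens]
      field_simp
      ring
    -- deriv (h+g) = (1 + lens) * deriv h = w^R * RHS... compute total:
    have hsum : deriv h z + deriv g z = w ^ ((a:ℂ) + R - 1) / (1 - z)^2 := by
      rw [hdilz, hlens]
      have hw2 : w ^ ((a:ℂ) + (R:ℂ) - 1) = w ^ ((a:ℂ) - 1) * w ^ (R:ℂ) := by
        rw [← Complex.cpow_add _ _ (w_ne hz)]; congr 1; ring
      have h1z : ((1:ℂ) - z)^2 ≠ 0 := pow_ne_zero 2 (one_sub_ne hz)
      have e1 : deriv h z = w ^ ((a:ℂ) - 1) / (1 - z)^2 * (w ^ (R:ℂ) + 1) / 2 := by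
        field_simp at hderivh ⊢
        linear_combination hderivh
      rw [e1, hw2]
      field_simp
      ring
    have hK := koebe_hasDerivAt ((a:ℂ) + R) hz
    have := ((hhz.hasDerivAt.add hgz.hasDerivAt).sub hK)
    rw [hsum, (by rfl : ((1 + z)/(1 - z)) = w)] at this
    simp at this; exact this
  -- constant on convex set
  have hconv : Convex ℝ unitDisk := by rw [unitDisk_eq_ball]; exact convex_ball 0 1
  have hdiff : DifferentiableOn ℂ (fun z => h z + g z - koebeFn ((a:ℂ) + R) z) unitDisk :=
    fun z hz => ((key z hz).differentiableAt.differentiableWithinAt)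
  have hfd : ∀ z ∈ unitDisk,
      fderivWithin ℂ (fun z => h z + g z - koebeFn ((a:ℂ) + R) z) unitDisk z = 0 := by
    intro z hz
    have hu : UniqueDiffWithinAt ℂ unitDisk z := isOpen_unitDisk.uniqueDiffWithinAt hz
    rw [((key z hz).hasFDerivAt.hasFDerivWithinAt).fderivWithin hu]
    ext v
    simp
  have hK0 : koebeFn ((a:ℂ) + R) 0 = 0 := by
    by_cases hc : (a:ℂ) + R = 0 <;> simp [koebeFn, hc]
  intro z hz
  have := hconv.is_const_of_fderivWithin_eq_zero hdiff hfd hz h0mem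
  simp only [h0, g0, hK0] at this
  linear_combination this
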